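/- For p ≥ 1 and i = 0: if K, L are star bodies in R^n, then B(K +̌_p L)^{-p/n} ≥ B(K)^{-p/n} + B(L)^{-p/n}, where B(K) = (1/n)∫_{S^{n-1}} d(K,u)^n dS(u), with equality if and only if K and L have similar chord. -/

import Mathlib

open MeasureTheory Metric Filter Set

noncomputable section

/-- A star body in `ℝⁿ`: a compact set, star-shaped about the origin, whose radial
function (recorded on the unit sphere) is positive and continuous. -/
structure StarBody (n : ℕ) where
  carrier : Set (EuclideanSpace ℝ (Fin n))
  radial : sphere (0 : EuclideanSpace ℝ (Fin n)) 1 → ℝ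
  radial_pos : ∀ u, 0 < radial u
  radial_continuous : Continuous radial
  isCompact : IsCompact carrier
  mem_iff : ∀ x, x ∈ carrier ↔ x = 0 ∨
    ∃ (u : sphere (0 : EuclideanSpace ℝ (Fin n)) 1) (c : ℝ),
      0 ≤ c ∧ c ≤ radial u ∧ x = c • (u : EuclideanSpace ℝ (Fin n))

/-- The half chord `d(K,u) = (ρ(K,u) + ρ(K,-u))/2` of a star body in direction `u`. -/
def StarBody.chord {n : ℕ} (K : StarBody n) (u : sphere (0 : EuclideanSpace ℝ (Fin n)) 1) : ℝ :=
  (K.radial u + K.radial (-u)) / 2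

/-- Spherical (surface-type) measure on the unit sphere of `ℝⁿ`. -/
def sphereMeasure (n : ℕ) : Measure (sphere (0 : EuclideanSpace ℝ (Fin n)) 1) :=
  (volume : Measure (EuclideanSpace ℝ (Fin n))).toSphere

/-- The chord integral `B_i(K) = (1/n) ∫_{S^{n-1}} d(K,u)^{n-i} dS(u)`. -/
def chordIntegral (n i : ℕ) (K : StarBody n) : ℝ :=
  (1 / (n : ℝ)) * ∫ u, K.chord u ^ ((n : ℝ) - i) ∂(sphereMeasure n)

/-- `K` and `L` have similar chord: `d(K,·) = λ d(L,·)` for some `λ > 0`. -/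
def SimilarChord {n : ℕ} (K L : StarBody n) : Prop :=
  ∃ lam : ℝ, 0 < lam ∧ ∀ u, K.chord u = lam * L.chord u

section Auxiliary

open Real

/-! ### Young's inequality with equality case -/

lemma young_ineq {r s a b : ℝ} (hr : 1 < r) (hs : 1 < s) (hrs : 1 / r + 1 / s = 1)
    (ha : 0 < a) (hb : 0 < b) :
    a * b ≤ a ^ r / r + b ^ s / s ∧ (a * b = a ^ r / r + b ^ s / s ↔ a ^ r = b ^ s) := by
  have hr0 : (0 : ℝ) < r := lt_trans one_pos hr
  have hs0 : (0 : ℝ) < s := lt_trans one_pos hs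
  set x := r * Real.log a with hxdef
  set y := s * Real.log b with hydef
  have hax : a ^ r = Real.exp x := by
    rw [Real.rpow_def_of_pos ha, hxdef, mul_comm]
  have hby : b ^ s = Real.exp y := by
    rw [Real.rpow_def_of_pos hb, hydef, mul_comm]
  have hab : a * b = Real.exp ((1 / r) * x + (1 / s) * y) := by
    have h1 : (1 / r) * x = Real.log a := by rw [hxdef]; field_simp
    have h2 : (1 / s) * y = Real.log b := by rw [hydef]; field_simp
    rw [h1, h2, Real.exp_add, Real.exp_log ha, Real.exp_log hb]
  have hro : (0 : ℝ) < 1 / r := by positivity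
  have hso : (0 : ℝ) < 1 / s := by positivity
  constructor
  · have := convexOn_exp.2 (Set.mem_univ x) (Set.mem_univ y) hro.le hso.le hrs
    simpa [smul_eq_mul, hab, hax, hby, div_eq_inv_mul, one_div, mul_comm] using this
  · constructor
    · intro heq
      by_contra hne
      have hxy : x ≠ y := by
        intro hxyeq
        exact hne (by rw [hax, hby, hxyeq])
      have hlt := strictConvexOn_exp.2 (Set.mem_univ x) (Set.mem_univ y) hxy hro hso hrs
      simp only [smul_eq_mul] at hlt
      rw [← hab] at hlt
      have hrew : a ^ r / r + b ^ s / s = 1 / r * Real.exp x + 1 / s * Real.exp y := by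
        rw [hax, hby]; ring
      linarith [heq.le, heq.ge]
    · intro heq
      have hxy : x = y := by
        rw [hax, hby] at heq
        exact Real.exp_injective heq
      rw [hab, hax, hby, hxy, ← add_mul, hrs, one_mul]
      have hfin : Real.exp y / r + Real.exp y / s = Real.exp y * (1 / r + 1 / s) := by ring
      rw [hfin, hrs, mul_one]

/-! ### Basic facts about the sphere measure -/

instance sphereMeasure_finite (n : ℕ) : IsFiniteMeasure (sphereMeasure n) :=
  inferInstanceAs (IsFiniteMeasure ((volume : Measure (EuclideanSpace ℝ (Fin n))).toSphere))

lemma sphereMeasure_isOpenPosMeasure {n : ℕ} (hn : 0 < n) :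
    (sphereMeasure n).IsOpenPosMeasure := by
  constructor
  intro s hs hne
  have hsm : MeasurableSet s := hs.measurableSet
  rw [sphereMeasure, Measure.toSphere_apply' _ hsm,
    ← Measure.toSphere_apply_aux (volume : Measure (EuclideanSpace ℝ (Fin n))) s
      ⟨1, Set.mem_Ioi.2 one_pos⟩]
  set E := EuclideanSpace ℝ (Fin n)
  set V : Set E := (↑) '' (homeomorphUnitSphereProd E ⁻¹'
    (s ×ˢ Set.Iio (⟨1, Set.mem_Ioi.2 one_pos⟩ : Set.Ioi (0 : ℝ))))
  have hIio : IsOpen (Set.Iio (⟨1, Set.mem_Ioi.2 one_pos⟩ : Set.Ioi (0 : ℝ))) := by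
    have : Set.Iio (⟨1, Set.mem_Ioi.2 one_pos⟩ : Set.Ioi (0 : ℝ)) =
        Subtype.val ⁻¹' Set.Iio (1 : ℝ) := by
      ext z
      simp only [Set.mem_Iio, Set.mem_preimage]
      exact Iff.rfl
    rw [this]
    exact isOpen_Iio.preimage continuous_subtype_val
  have hVopen : IsOpen V := by
    apply (isOpen_compl_singleton (x := (0 : E))).isOpenMap_subtype_val
    exact (Homeomorph.isOpen_preimage _).2 (hs.prod hIio)
  have hVne : V.Nonempty := by
    obtain ⟨u, hu⟩ := hne
    refine ⟨_, Set.mem_image_of_mem _ (x := (homeomorphUnitSphereProd E).symm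
      (u, (⟨(1:ℝ)/2, by norm_num⟩ : Set.Ioi (0:ℝ)))) ?_⟩
    simp only [Set.mem_preimage, Homeomorph.apply_symm_apply]
    refine ⟨hu, ?_⟩
    simp only [Set.mem_Iio]
    exact Subtype.mk_lt_mk.2 (by norm_num)
  have hdim : (Module.finrank ℝ E) = n := finrank_euclideanSpace_fin
  refine mul_ne_zero ?_ ?_
  · simp [hdim]; omega
  · exact (hVopen.measure_pos volume hVne).ne'

lemma continuous_integrable_sphere {n : ℕ}
    {f : sphere (0 : EuclideanSpace ℝ (Fin n)) 1 → ℝ} (hf : Continuous f) :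
    Integrable f (sphereMeasure n) :=
  integrableOn_univ.mp (hf.continuousOn.integrableOn_compact isCompact_univ)

lemma integral_pos_sphere {n : ℕ} (hn : 0 < n)
    {f : sphere (0 : EuclideanSpace ℝ (Fin n)) 1 → ℝ} (hf : Continuous f)
    (hpos : ∀ x, 0 < f x) : 0 < ∫ x, f x ∂(sphereMeasure n) := by
  haveI := sphereMeasure_isOpenPosMeasure hn
  haveI : Nontrivial (EuclideanSpace ℝ (Fin n)) :=
    Module.nontrivial_of_finrank_pos (R := ℝ) (by rw [finrank_euclideanSpace_fin]; exact hn)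
  obtain ⟨x, hx⟩ : (sphere (0 : EuclideanSpace ℝ (Fin n)) 1).Nonempty :=
    NormedSpace.sphere_nonempty.2 zero_le_one
  exact integral_pos_of_integrable_nonneg_nonzero hf (continuous_integrable_sphere hf)
    (fun y => (hpos y).le) (hpos ⟨x, hx⟩).ne'

/-! ### Hölder's inequality on the sphere with equality case -/

lemma holder_sphere {n : ℕ} (hn : 0 < n)
    {A B : sphere (0 : EuclideanSpace ℝ (Fin n)) 1 → ℝ}
    (hA : Continuous A) (hB : Continuous B) (hApos : ∀ x, 0 < A x) (hBpos : ∀ x, 0 < B x)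
    {r s : ℝ} (hr : 1 < r) (hs : 1 < s) (hrs : 1 / r + 1 / s = 1) :
    (∫ x, A x * B x ∂(sphereMeasure n)) ≤
      (∫ x, A x ^ r ∂(sphereMeasure n)) ^ (1 / r) *
      (∫ x, B x ^ s ∂(sphereMeasure n)) ^ (1 / s) ∧
    ((∫ x, A x * B x ∂(sphereMeasure n)) =
      (∫ x, A x ^ r ∂(sphereMeasure n)) ^ (1 / r) *
      (∫ x, B x ^ s ∂(sphereMeasure n)) ^ (1 / s) ↔
      ∃ c : ℝ, 0 < c ∧ ∀ x, A x ^ r = c * B x ^ s) := by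
  haveI := sphereMeasure_isOpenPosMeasure hn
  set μ := sphereMeasure n
  have hr0 : (0 : ℝ) < r := lt_trans one_pos hr
  have hs0 : (0 : ℝ) < s := lt_trans one_pos hs
  have hAr : Continuous fun x => A x ^ r := hA.rpow_const fun x => Or.inl (hApos x).ne'
  have hBs : Continuous fun x => B x ^ s := hB.rpow_const fun x => Or.inl (hBpos x).ne'
  set IA := ∫ x, A x ^ r ∂μ with hIA
  set IB := ∫ x, B x ^ s ∂μ with hIB
  have hIApos : 0 < IA := integral_pos_sphere hn hAr fun x => Real.rpow_pos_of_pos (hApos x) r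
  have hIBpos : 0 < IB := integral_pos_sphere hn hBs fun x => Real.rpow_pos_of_pos (hBpos x) s
  set cA := IA ^ (1 / r) with hcA
  set cB := IB ^ (1 / s) with hcB
  have hcApos : 0 < cA := Real.rpow_pos_of_pos hIApos _
  have hcBpos : 0 < cB := Real.rpow_pos_of_pos hIBpos _
  have hcAr : cA ^ r = IA := by
    rw [hcA, one_div, Real.rpow_inv_rpow hIApos.le hr0.ne']
  have hcBs : cB ^ s = IB := by
    rw [hcB, one_div, Real.rpow_inv_rpow hIBpos.le hs0.ne']
  -- the pointwise defect
  set D : sphere (0 : EuclideanSpace ℝ (Fin n)) 1 → ℝ :=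
    fun x => (A x / cA) ^ r / r + (B x / cB) ^ s / s - (A x / cA) * (B x / cB) with hD
  have hDform : ∀ x, D x = A x ^ r * (IA⁻¹ * r⁻¹) + B x ^ s * (IB⁻¹ * s⁻¹)
      - A x * B x * (cA * cB)⁻¹ := by
    intro x
    simp only [hD]
    rw [Real.div_rpow (hApos x).le hcApos.le, Real.div_rpow (hBpos x).le hcBpos.le, hcAr, hcBs]
    field_simp
  have hDcont : Continuous D := by
    have h1 : Continuous fun x => (A x / cA) ^ r :=
      (hA.div_const cA).rpow_const fun x => Or.inl (div_pos (hApos x) hcApos).ne'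
    have h2 : Continuous fun x => (B x / cB) ^ s :=
      (hB.div_const cB).rpow_const fun x => Or.inl (div_pos (hBpos x) hcBpos).ne'
    simp only [hD]
    exact ((h1.div_const r).add (h2.div_const s)).sub
      ((hA.div_const cA).mul (hB.div_const cB))
  have hDnonneg : ∀ x, 0 ≤ D x := by
    intro x
    have := (young_ineq hr hs hrs (div_pos (hApos x) hcApos) (div_pos (hBpos x) hcBpos)).1
    simp only [hD]; linarith
  have hDeq_iff : ∀ x, D x = 0 ↔ (A x / cA) ^ r = (B x / cB) ^ s := by
    intro x
    have h2 := (young_ineq hr hs hrs (div_pos (hApos x) hcApos) (div_pos (hBpos x) hcBpos)).2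
    simp only [hD]
    constructor
    · intro h0
      exact h2.1 (by linarith)
    · intro hv
      have := h2.2 hv
      linarith
  -- integral of D
  have hint1 : Integrable (fun x => A x ^ r * (IA⁻¹ * r⁻¹)) μ :=
    continuous_integrable_sphere (hAr.mul continuous_const)
  have hint2 : Integrable (fun x => B x ^ s * (IB⁻¹ * s⁻¹)) μ :=
    continuous_integrable_sphere (hBs.mul continuous_const)
  have hint12 : Integrable (fun x => A x ^ r * (IA⁻¹ * r⁻¹) + B x ^ s * (IB⁻¹ * s⁻¹)) μ :=
    continuous_integrable_sphere ((hAr.mul continuous_const).add (hBs.mul continuous_const))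
  have hint3 : Integrable (fun x => A x * B x * (cA * cB)⁻¹) μ :=
    continuous_integrable_sphere ((hA.mul hB).mul continuous_const)
  have hDint : ∫ x, D x ∂μ = 1 - (∫ x, A x * B x ∂μ) * (cA * cB)⁻¹ := by
    have hcongr : ∫ x, D x ∂μ = ∫ x, (A x ^ r * (IA⁻¹ * r⁻¹) + B x ^ s * (IB⁻¹ * s⁻¹)
        - A x * B x * (cA * cB)⁻¹) ∂μ := by
      exact integral_congr_ae (Filter.Eventually.of_forall fun x => hDform x)
    rw [hcongr, integral_sub hint12 hint3, integral_add hint1 hint2,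
      integral_mul_const, integral_mul_const, integral_mul_const, ← hIA, ← hIB]
    have e1 : IA * (IA⁻¹ * r⁻¹) = 1 / r := by
      field_simp
    have e2 : IB * (IB⁻¹ * s⁻¹) = 1 / s := by
      field_simp
    rw [e1, e2, hrs]
  have hmain : (∫ x, A x * B x ∂μ) ≤ cA * cB := by
    have h0 : 0 ≤ ∫ x, D x ∂μ := integral_nonneg hDnonneg
    rw [hDint] at h0
    have hcc : 0 < cA * cB := mul_pos hcApos hcBpos
    have h1 : (∫ x, A x * B x ∂μ) * (cA * cB)⁻¹ ≤ 1 := by linarith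
    calc (∫ x, A x * B x ∂μ)
        = ((∫ x, A x * B x ∂μ) * (cA * cB)⁻¹) * (cA * cB) := by field_simp
      _ ≤ 1 * (cA * cB) := mul_le_mul_of_nonneg_right h1 hcc.le
      _ = cA * cB := one_mul _
  constructor
  · exact hmain
  constructor
  · -- equality → proportional
    intro heq
    have hDzero : ∫ x, D x ∂μ = 0 := by
      rw [hDint, heq]
      field_simp
      norm_num
    have hDae : D =ᵐ[μ] 0 :=
      (integral_eq_zero_iff_of_nonneg hDnonneg (continuous_integrable_sphere hDcont)).1 hDzero
    have hDzero' : D = 0 := (hDcont.ae_eq_iff_eq μ continuous_zero).1 hDae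
    refine ⟨IA / IB, div_pos hIApos hIBpos, fun x => ?_⟩
    have hx0 : D x = 0 := by rw [hDzero']; rfl
    have := (hDeq_iff x).1 hx0
    rw [Real.div_rpow (hApos x).le hcApos.le, Real.div_rpow (hBpos x).le hcBpos.le,
      hcAr, hcBs] at this
    field_simp at this ⊢
    linarith [this]
  · -- proportional → equality
    rintro ⟨c, hc, hprop⟩
    have hIAc : IA = c * IB := by
      rw [hIA, hIB]
      rw [integral_congr_ae (Filter.Eventually.of_forall fun x => hprop x)]
      exact integral_const_mul c _
    have hDzero : ∀ x, D x = 0 := by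
      intro x
      rw [hDeq_iff x]
      rw [Real.div_rpow (hApos x).le hcApos.le, Real.div_rpow (hBpos x).le hcBpos.le,
        hcAr, hcBs, hprop x, hIAc]
      rw [mul_div_mul_left _ _ hc.ne']
    have h0 : ∫ x, D x ∂μ = 0 := by
      rw [integral_congr_ae (Filter.Eventually.of_forall fun x => hDzero x)]
      simp
    rw [hDint] at h0
    have hcc : (0:ℝ) < cA * cB := mul_pos hcApos hcBpos
    have : (∫ x, A x * B x ∂μ) * (cA * cB)⁻¹ = 1 := by linarith
    calc (∫ x, A x * B x ∂μ) = ((∫ x, A x * B x ∂μ) * (cA * cB)⁻¹) * (cA * cB) := by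
          field_simp
      _ = cA * cB := by rw [this, one_mul]

lemma StarBody.chord_continuous {n : ℕ} (K : StarBody n) : Continuous K.chord :=
  ((K.radial_continuous).add (K.radial_continuous.comp continuous_neg)).div_const 2

lemma StarBody.chord_pos {n : ℕ} (K : StarBody n)
    (u : sphere (0 : EuclideanSpace ℝ (Fin n)) 1) : 0 < K.chord u := by
  have h1 := K.radial_pos u
  have h2 := K.radial_pos (-u)
  unfold StarBody.chord
  linarith

end Auxiliary

/-- `L_p`-Brunn–Minkowski inequality for the chord integral (`i = 0`):
`B(K +̌_p L)^{-p/n} ≥ B(K)^{-p/n} + B(L)^{-p/n}`, with equality iff `K` and `L` have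
similar chord. -/
theorem lp_brunn_minkowski_chordIntegral_zero {n : ℕ} (hn : 0 < n) {p : ℝ} (hp : 1 ≤ p)
    (K L KL : StarBody n)
    (hKL : ∀ u, KL.chord u ^ (-p) = K.chord u ^ (-p) + L.chord u ^ (-p)) :
    chordIntegral n 0 KL ^ (-p / (n : ℝ)) ≥
      chordIntegral n 0 K ^ (-p / (n : ℝ)) + chordIntegral n 0 L ^ (-p / (n : ℝ)) ∧
    (chordIntegral n 0 KL ^ (-p / (n : ℝ)) =
        chordIntegral n 0 K ^ (-p / (n : ℝ)) + chordIntegral n 0 L ^ (-p / (n : ℝ)) ↔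
      SimilarChord K L) := by
  classical
  have hR : (0 : ℝ) < (n : ℝ) := Nat.cast_pos.2 hn
  set R := (n : ℝ) with hRdef
  have hp0 : (0 : ℝ) < p := lt_of_lt_of_le one_pos hp
  have hRp : (0 : ℝ) < R + p := by linarith
  set μ := sphereMeasure n with hμdef
  set dK := K.chord with hdK
  set dL := L.chord with hdL
  set dM := KL.chord with hdM
  have hcK : Continuous dK := K.chord_continuous
  have hcL : Continuous dL := L.chord_continuous
  have hcM : Continuous dM := KL.chord_continuous
  have hpK : ∀ x, 0 < dK x := K.chord_pos
  have hpL : ∀ x, 0 < dL x := L.chord_pos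
  have hpM : ∀ x, 0 < dM x := KL.chord_pos
  -- exponents
  set r := (R + p) / R with hrdef
  set s := (R + p) / p with hsdef
  have hr1 : 1 < r := by rw [hrdef, lt_div_iff₀ hR]; linarith
  have hs1 : 1 < s := by rw [hsdef, lt_div_iff₀ hp0]; linarith
  have hr0 : (0 : ℝ) < r := lt_trans one_pos hr1
  have hs0 : (0 : ℝ) < s := lt_trans one_pos hs1
  have hrs : 1 / r + 1 / s = 1 := by
    rw [hrdef, hsdef]
    field_simp
  set e := p * R / (R + p) with hedef
  have he0 : (0 : ℝ) < e := by rw [hedef]; positivity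
  set β := -p / R with hβdef
  -- the auxiliary functions for Hölder
  set A1 : sphere (0 : EuclideanSpace ℝ (Fin n)) 1 → ℝ :=
    fun x => dM x ^ R * dK x ^ (-e) with hA1def
  set B1 : sphere (0 : EuclideanSpace ℝ (Fin n)) 1 → ℝ := fun x => dK x ^ e with hB1def
  set A2 : sphere (0 : EuclideanSpace ℝ (Fin n)) 1 → ℝ :=
    fun x => dM x ^ R * dL x ^ (-e) with hA2def
  set B2 : sphere (0 : EuclideanSpace ℝ (Fin n)) 1 → ℝ := fun x => dL x ^ e with hB2def
  have hA1c : Continuous A1 :=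
    (hcM.rpow_const fun x => Or.inl (hpM x).ne').mul
      (hcK.rpow_const fun x => Or.inl (hpK x).ne')
  have hA2c : Continuous A2 :=
    (hcM.rpow_const fun x => Or.inl (hpM x).ne').mul
      (hcL.rpow_const fun x => Or.inl (hpL x).ne')
  have hB1c : Continuous B1 := hcK.rpow_const fun x => Or.inl (hpK x).ne'
  have hB2c : Continuous B2 := hcL.rpow_const fun x => Or.inl (hpL x).ne'
  have hA1p : ∀ x, 0 < A1 x := fun x =>
    mul_pos (Real.rpow_pos_of_pos (hpM x) _) (Real.rpow_pos_of_pos (hpK x) _)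
  have hA2p : ∀ x, 0 < A2 x := fun x =>
    mul_pos (Real.rpow_pos_of_pos (hpM x) _) (Real.rpow_pos_of_pos (hpL x) _)
  have hB1p : ∀ x, 0 < B1 x := fun x => Real.rpow_pos_of_pos (hpK x) _
  have hB2p : ∀ x, 0 < B2 x := fun x => Real.rpow_pos_of_pos (hpL x) _
  -- pointwise identities
  have id1 : ∀ x, A1 x * B1 x = dM x ^ R := by
    intro x
    simp only [hA1def, hB1def]
    rw [mul_assoc, ← Real.rpow_add (hpK x), neg_add_cancel, Real.rpow_zero, mul_one]
  have id1' : ∀ x, A2 x * B2 x = dM x ^ R := by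
    intro x
    simp only [hA2def, hB2def]
    rw [mul_assoc, ← Real.rpow_add (hpL x), neg_add_cancel, Real.rpow_zero, mul_one]
  have eRr : R * r = R + p := by rw [hrdef]; field_simp
  have eer : -e * r = -p := by
    rw [hedef, hrdef]
    field_simp
  have ees : e * s = R := by
    rw [hedef, hsdef]
    field_simp
  have id2 : ∀ x, A1 x ^ r = dM x ^ (R + p) * dK x ^ (-p) := by
    intro x
    simp only [hA1def]
    rw [Real.mul_rpow (Real.rpow_nonneg (hpM x).le _) (Real.rpow_nonneg (hpK x).le _),
      ← Real.rpow_mul (hpM x).le, ← Real.rpow_mul (hpK x).le, eRr, eer]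
  have id2' : ∀ x, A2 x ^ r = dM x ^ (R + p) * dL x ^ (-p) := by
    intro x
    simp only [hA2def]
    rw [Real.mul_rpow (Real.rpow_nonneg (hpM x).le _) (Real.rpow_nonneg (hpL x).le _),
      ← Real.rpow_mul (hpM x).le, ← Real.rpow_mul (hpL x).le, eRr, eer]
  have id3 : ∀ x, B1 x ^ s = dK x ^ R := by
    intro x
    simp only [hB1def]
    rw [← Real.rpow_mul (hpK x).le, ees]
  have id3' : ∀ x, B2 x ^ s = dL x ^ R := by
    intro x
    simp only [hB2def]
    rw [← Real.rpow_mul (hpL x).le, ees]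
  -- integrals
  set S := ∫ x, dM x ^ R ∂μ with hSdef
  set F := ∫ x, dK x ^ R ∂μ with hFdef
  set G := ∫ x, dL x ^ R ∂μ with hGdef
  set X := ∫ x, A1 x ^ r ∂μ with hXdef
  set Y := ∫ x, A2 x ^ r ∂μ with hYdef
  have hcMR : Continuous fun x => dM x ^ R := hcM.rpow_const fun x => Or.inl (hpM x).ne'
  have hcKR : Continuous fun x => dK x ^ R := hcK.rpow_const fun x => Or.inl (hpK x).ne'
  have hcLR : Continuous fun x => dL x ^ R := hcL.rpow_const fun x => Or.inl (hpL x).ne'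
  have hA1rc : Continuous fun x => A1 x ^ r := hA1c.rpow_const fun x => Or.inl (hA1p x).ne'
  have hA2rc : Continuous fun x => A2 x ^ r := hA2c.rpow_const fun x => Or.inl (hA2p x).ne'
  have hS : 0 < S := integral_pos_sphere hn hcMR fun x => Real.rpow_pos_of_pos (hpM x) _
  have hF : 0 < F := integral_pos_sphere hn hcKR fun x => Real.rpow_pos_of_pos (hpK x) _
  have hG : 0 < G := integral_pos_sphere hn hcLR fun x => Real.rpow_pos_of_pos (hpL x) _
  have hX : 0 < X := integral_pos_sphere hn hA1rc fun x => Real.rpow_pos_of_pos (hA1p x) _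
  have hY : 0 < Y := integral_pos_sphere hn hA2rc fun x => Real.rpow_pos_of_pos (hA2p x) _
  -- Hölder for each pair
  have hHol1 := holder_sphere hn hA1c hB1c hA1p hB1p hr1 hs1 hrs
  have hHol2 := holder_sphere hn hA2c hB2c hA2p hB2p hr1 hs1 hrs
  have hintAB1 : (∫ x, A1 x * B1 x ∂μ) = S := by
    rw [hSdef]
    exact integral_congr_ae (Filter.Eventually.of_forall fun x => id1 x)
  have hintAB2 : (∫ x, A2 x * B2 x ∂μ) = S := by
    rw [hSdef]
    exact integral_congr_ae (Filter.Eventually.of_forall fun x => id1' x)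
  have hintB1 : (∫ x, B1 x ^ s ∂μ) = F := by
    rw [hFdef]
    exact integral_congr_ae (Filter.Eventually.of_forall fun x => id3 x)
  have hintB2 : (∫ x, B2 x ^ s ∂μ) = G := by
    rw [hGdef]
    exact integral_congr_ae (Filter.Eventually.of_forall fun x => id3' x)
  rw [hintAB1, hintB1, ← hXdef] at hHol1
  rw [hintAB2, hintB2, ← hYdef] at hHol2
  -- X + Y = S
  have idXY : ∀ x, A1 x ^ r + A2 x ^ r = dM x ^ R := by
    intro x
    rw [id2 x, id2' x, ← mul_add, ← hKL x, ← Real.rpow_add (hpM x), add_neg_cancel_right]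
  have hXY : X + Y = S := by
    rw [hXdef, hYdef, hSdef,
      ← integral_add (continuous_integrable_sphere hA1rc) (continuous_integrable_sphere hA2rc)]
    exact integral_congr_ae (Filter.Eventually.of_forall fun x => idXY x)
  -- exponent bookkeeping
  have hβr : -(1 / s * r) = β := by
    rw [hβdef, hsdef, hrdef]
    field_simp
  have hrβ : r + β = 1 := by
    rw [hβdef, hrdef]
    field_simp
    ring
  -- lower bounds on X and Y
  have hXb : S ^ r * F ^ β ≤ X := by
    have hF1s : (0 : ℝ) < F ^ (1 / s) := Real.rpow_pos_of_pos hF _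
    have step1 : S / F ^ (1 / s) ≤ X ^ (1 / r) := (div_le_iff₀ hF1s).2 hHol1.1
    have step2 : (S / F ^ (1 / s)) ^ r ≤ (X ^ (1 / r)) ^ r :=
      Real.rpow_le_rpow (by positivity) step1 hr0.le
    rw [Real.div_rpow hS.le (Real.rpow_nonneg hF.le _), ← Real.rpow_mul hX.le,
      one_div_mul_cancel hr0.ne', Real.rpow_one, ← Real.rpow_mul hF.le,
      div_eq_mul_inv, ← Real.rpow_neg hF.le, hβr] at step2
    exact step2
  have hYb : S ^ r * G ^ β ≤ Y := by
    have hG1s : (0 : ℝ) < G ^ (1 / s) := Real.rpow_pos_of_pos hG _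
    have step1 : S / G ^ (1 / s) ≤ Y ^ (1 / r) := (div_le_iff₀ hG1s).2 hHol2.1
    have step2 : (S / G ^ (1 / s)) ^ r ≤ (Y ^ (1 / r)) ^ r :=
      Real.rpow_le_rpow (by positivity) step1 hr0.le
    rw [Real.div_rpow hS.le (Real.rpow_nonneg hG.le _), ← Real.rpow_mul hY.le,
      one_div_mul_cancel hr0.ne', Real.rpow_one, ← Real.rpow_mul hG.le,
      div_eq_mul_inv, ← Real.rpow_neg hG.le, hβr] at step2
    exact step2
  have hSsplit : S ^ r * S ^ β = S := by
    rw [← Real.rpow_add hS, hrβ, Real.rpow_one]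
  have hSr : (0 : ℝ) < S ^ r := Real.rpow_pos_of_pos hS _
  -- core inequality
  have core_ineq : F ^ β + G ^ β ≤ S ^ β := by
    have hsum : S ^ r * F ^ β + S ^ r * G ^ β ≤ S ^ r * S ^ β := by
      rw [hSsplit]
      calc S ^ r * F ^ β + S ^ r * G ^ β ≤ X + Y := add_le_add hXb hYb
        _ = S := hXY
    exact le_of_mul_le_mul_left (by rw [mul_add]; exact hsum) hSr
  -- core equality iff
  have core_iff : S ^ β = F ^ β + G ^ β ↔ SimilarChord K L := by
    constructor
    · intro hE
      have hXYeq : X + Y = S ^ r * F ^ β + S ^ r * G ^ β := by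
        rw [hXY, ← mul_add, ← hE, hSsplit]
      have hXeq : X = S ^ r * F ^ β := le_antisymm (by linarith) hXb
      -- equality in the first Hölder inequality
      have hHolEq1 : S = X ^ (1 / r) * F ^ (1 / s) := by
        rw [hXeq, Real.mul_rpow hSr.le (Real.rpow_nonneg hF.le _), one_div,
          Real.rpow_rpow_inv hS.le hr0.ne', ← Real.rpow_mul hF.le, mul_assoc,
          ← Real.rpow_add hF]
        have hz : β * r⁻¹ + 1 / s = 0 := by
          rw [hβdef, hrdef, hsdef]
          field_simp
          ring
        rw [hz, Real.rpow_zero, mul_one]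
      obtain ⟨c, hc, hcprop⟩ := hHol1.2.1 hHolEq1
      have hYeq : Y = S ^ r * G ^ β := le_antisymm (by linarith) hYb
      have hHolEq2 : S = Y ^ (1 / r) * G ^ (1 / s) := by
        rw [hYeq, Real.mul_rpow hSr.le (Real.rpow_nonneg hG.le _), one_div,
          Real.rpow_rpow_inv hS.le hr0.ne', ← Real.rpow_mul hG.le, mul_assoc,
          ← Real.rpow_add hG]
        have hz : β * r⁻¹ + 1 / s = 0 := by
          rw [hβdef, hrdef, hsdef]
          field_simp
          ring
        rw [hz, Real.rpow_zero, mul_one]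
      obtain ⟨c', hc', hcprop'⟩ := hHol2.2.1 hHolEq2
      -- translate proportionality into dM = a * dK and dM = a' * dL
      have hprop1 : ∀ x, dM x ^ (R + p) = c * dK x ^ (R + p) := by
        intro x
        have hx := hcprop x
        rw [id2 x, id3 x] at hx
        have : dM x ^ (R + p) * dK x ^ (-p) * dK x ^ p = c * dK x ^ R * dK x ^ p := by
          rw [hx]
        rw [mul_assoc, ← Real.rpow_add (hpK x), neg_add_cancel, Real.rpow_zero, mul_one,
          mul_assoc, ← Real.rpow_add (hpK x)] at this
        exact this
      have hprop2 : ∀ x, dM x ^ (R + p) = c' * dL x ^ (R + p) := by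
        intro x
        have hx := hcprop' x
        rw [id2' x, id3' x] at hx
        have : dM x ^ (R + p) * dL x ^ (-p) * dL x ^ p = c' * dL x ^ R * dL x ^ p := by
          rw [hx]
        rw [mul_assoc, ← Real.rpow_add (hpL x), neg_add_cancel, Real.rpow_zero, mul_one,
          mul_assoc, ← Real.rpow_add (hpL x)] at this
        exact this
      set a := c ^ (R + p)⁻¹ with hadef
      set a' := c' ^ (R + p)⁻¹ with ha'def
      have ha : 0 < a := Real.rpow_pos_of_pos hc _
      have ha' : 0 < a' := Real.rpow_pos_of_pos hc' _
      have hMK : ∀ x, dM x = a * dK x := by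
        intro x
        apply Real.rpow_left_injOn (x := R + p) hRp.ne'
          (Set.mem_setOf.2 (hpM x).le) (Set.mem_setOf.2 (mul_pos ha (hpK x)).le)
        simp only
        rw [Real.mul_rpow ha.le (hpK x).le, hadef, Real.rpow_inv_rpow hc.le hRp.ne']
        exact hprop1 x
      have hML : ∀ x, dM x = a' * dL x := by
        intro x
        apply Real.rpow_left_injOn (x := R + p) hRp.ne'
          (Set.mem_setOf.2 (hpM x).le) (Set.mem_setOf.2 (mul_pos ha' (hpL x)).le)
        simp only
        rw [Real.mul_rpow ha'.le (hpL x).le, ha'def, Real.rpow_inv_rpow hc'.le hRp.ne']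
        exact hprop2 x
      refine ⟨a' / a, div_pos ha' ha, fun u => ?_⟩
      show dK u = a' / a * dL u
      have h3 : a * dK u = a' * dL u := by rw [← hMK u, ← hML u]
      rw [div_mul_eq_mul_div, eq_div_iff ha.ne']
      linear_combination h3
    · rintro ⟨lam, hlam, hfg0⟩
      have hfg : ∀ u, dK u = lam * dL u := by
        intro u
        rw [hdK, hdL]
        exact hfg0 u
      set m := (lam ^ (-p) + 1) ^ (-(1 / p)) with hmdef
      have hlamp : (0 : ℝ) < lam ^ (-p) + 1 := by positivity
      have hm : 0 < m := Real.rpow_pos_of_pos hlamp _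
      have hmp : m ^ (-p) = lam ^ (-p) + 1 := by
        rw [hmdef, ← Real.rpow_mul hlamp.le]
        have : -(1 / p) * -p = 1 := by field_simp
        rw [this, Real.rpow_one]
      have hMg : ∀ u, dM u = m * dL u := by
        intro u
        apply Real.rpow_left_injOn (x := -p) (neg_ne_zero.2 hp0.ne')
        · exact Set.mem_setOf.2 (hpM u).le
        · exact Set.mem_setOf.2 (mul_pos hm (hpL u)).le
        simp only
        rw [Real.mul_rpow hm.le (hpL u).le, hmp, hKL u, hfg u,
          Real.mul_rpow hlam.le (hpL u).le]
        ring
      have hSG : S = m ^ R * G := by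
        rw [hSdef, hGdef, ← integral_const_mul]
        refine integral_congr_ae (Filter.Eventually.of_forall fun x => ?_)
        show dM x ^ R = m ^ R * dL x ^ R
        rw [hMg x, Real.mul_rpow hm.le (hpL x).le]
      have hFG : F = lam ^ R * G := by
        rw [hFdef, hGdef, ← integral_const_mul]
        refine integral_congr_ae (Filter.Eventually.of_forall fun x => ?_)
        show dK x ^ R = lam ^ R * dL x ^ R
        rw [hfg x, Real.mul_rpow hlam.le (hpL x).le]
      have hRβ : R * β = -p := by
        rw [hβdef]
        field_simp
      have hmβ : (m ^ R) ^ β = lam ^ (-p) + 1 := by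
        rw [← Real.rpow_mul hm.le, hRβ, hmp]
      have hlamβ : (lam ^ R) ^ β = lam ^ (-p) := by
        rw [← Real.rpow_mul hlam.le, hRβ]
      rw [hSG, hFG, Real.mul_rpow (Real.rpow_nonneg hm.le _) hG.le,
        Real.mul_rpow (Real.rpow_nonneg hlam.le _) hG.le, hmβ, hlamβ]
      ring
  -- translate to chordIntegral
  have hBKL : chordIntegral n 0 KL = 1 / R * S := by
    rw [chordIntegral]
    simp only [Nat.cast_zero, sub_zero]
    rfl
  have hBK : chordIntegral n 0 K = 1 / R * F := by
    rw [chordIntegral]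
    simp only [Nat.cast_zero, sub_zero]
    rfl
  have hBL : chordIntegral n 0 L = 1 / R * G := by
    rw [chordIntegral]
    simp only [Nat.cast_zero, sub_zero]
    rfl
  have hinvR : (0 : ℝ) ≤ 1 / R := by positivity
  have hk : (0 : ℝ) < (1 / R) ^ β := Real.rpow_pos_of_pos (by positivity) _
  rw [hBKL, hBK, hBL, Real.mul_rpow hinvR hS.le,
    Real.mul_rpow hinvR hF.le, Real.mul_rpow hinvR hG.le]
  constructor
  · rw [← mul_add]
    exact mul_le_mul_of_nonneg_left core_ineq hk.le
  · rw [← mul_add, mul_right_inj' hk.ne']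
    exact core_iff
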